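/- Let m ≥ 1, ε ≥ 0, and let F : ℝ^m → ℝ be such that for each index k, when all variables other than φ_k are fixed, the resulting single-variable function is of the form a + b·cos φ_k + c·sin φ_k (with coefficients depending on the other variables). Assume that F(φ_c) ∈ {−1, 0, 1} for every Clifford point φ_c ∈ {0, π/2, π, 3π/2}^m, that the mean of F over [0,2π]^m is zero, and that the mean of F² over [0,2π]^m is at most ε. Then the fraction of Clifford points at which F is nonzero is at most ε: |{φ_c ∈ {0, π/2, π, 3π/2}^m : F(φ_c) ≠ 0}| / 4^m ≤ ε. -/

import Mathlib

open Real MeasureTheory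

lemma quad1 (g : ℝ → ℝ) (a b c d e : ℝ)
    (hg : ∀ t, g t = a + b * Real.cos t + c * Real.sin t
      + d * Real.cos (2*t) + e * Real.sin (2*t)) :
    ∫ x in Set.Icc (0:ℝ) (2*π), g x
      = (π/2) * ∑ j : Fin 4, g (((j : ℕ) : ℝ) * (π/2)) := by
  have hπ : (0:ℝ) ≤ 2*π := by positivity
  have hgc : Continuous g := by
    have : g = fun t => a + b * Real.cos t + c * Real.sin t
      + d * Real.cos (2*t) + e * Real.sin (2*t) := funext hg
    rw [this]; continuity
  have hL : ∫ x in Set.Icc (0:ℝ) (2*π), g x = 2*π*a := by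
    rw [MeasureTheory.integral_Icc_eq_integral_Ioc,
      ← intervalIntegral.integral_of_le hπ]
    have hderiv : ∀ t ∈ Set.uIcc (0:ℝ) (2*π),
        HasDerivAt (fun t => a*t + b*Real.sin t - c*Real.cos t
          + d*Real.sin (2*t)/2 - e*Real.cos (2*t)/2) (g t) t := by
      intro t _
      have h1 : HasDerivAt (fun t : ℝ => a*t) a t := by
        simpa using (hasDerivAt_id t).const_mul a
      have h2 : HasDerivAt (fun t : ℝ => b*Real.sin t) (b * Real.cos t) t :=
        (Real.hasDerivAt_sin t).const_mul b
      have h3 : HasDerivAt (fun t : ℝ => c*Real.cos t) (c * (-Real.sin t)) t :=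
        (Real.hasDerivAt_cos t).const_mul c
      have h2t : HasDerivAt (fun t : ℝ => 2*t) 2 t := by
        simpa using (hasDerivAt_id t).const_mul 2
      have h4 : HasDerivAt (fun t : ℝ => d*Real.sin (2*t)/2)
          (d * (Real.cos (2*t) * 2) / 2) t := by
        exact (((Real.hasDerivAt_sin (2*t)).comp t h2t).const_mul d).div_const 2
      have h5 : HasDerivAt (fun t : ℝ => e*Real.cos (2*t)/2)
          (e * (-Real.sin (2*t) * 2) / 2) t := by
        exact (((Real.hasDerivAt_cos (2*t)).comp t h2t).const_mul e).div_const 2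
      have := ((((h1.add h2).sub h3).add h4).sub h5)
      refine this.congr_deriv ?_
      rw [hg t]; ring
    rw [intervalIntegral.integral_eq_sub_of_hasDerivAt hderiv
      (hgc.intervalIntegrable _ _)]
    have e1 : Real.sin (2*(2*π)) = 0 := by
      rw [show (2:ℝ)*(2*π) = 2*π + 2*π by ring, Real.sin_add]; simp
    have e2 : Real.cos (2*(2*π)) = 1 := by
      rw [show (2:ℝ)*(2*π) = 2*π + 2*π by ring, Real.cos_add]; simp
    simp [Real.sin_two_pi, Real.cos_two_pi, e1, e2]
    ring
  have hR : ∑ j : Fin 4, g (((j : ℕ) : ℝ) * (π/2)) = 4*a := by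
    rw [Fin.sum_univ_four]
    have n0 : ((0:Fin 4):ℕ) = 0 := rfl
    have n1 : ((1:Fin 4):ℕ) = 1 := rfl
    have n2 : ((2:Fin 4):ℕ) = 2 := rfl
    have n3 : ((3:Fin 4):ℕ) = 3 := rfl
    have v0 : ((((0:Fin 4) : ℕ)) : ℝ) * (π/2) = 0 := by rw [n0]; norm_num
    have v1 : ((((1:Fin 4) : ℕ)) : ℝ) * (π/2) = π/2 := by rw [n1]; norm_num
    have v2 : ((((2:Fin 4) : ℕ)) : ℝ) * (π/2) = π := by rw [n2]; push_cast; ring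
    have v3 : ((((3:Fin 4) : ℕ)) : ℝ) * (π/2) = π + π/2 := by rw [n3]; push_cast; ring
    rw [v0, v1, v2, v3, hg, hg, hg, hg]
    have c3 : Real.cos (π + π/2) = 0 := by rw [Real.cos_add]; simp
    have s3 : Real.sin (π + π/2) = -1 := by rw [Real.sin_add]; simp
    have c3p : Real.cos (2*(π + π/2)) = -1 := by
      rw [show (2:ℝ)*(π+π/2) = 2*π + π by ring, Real.cos_add]; simp
    have s3p : Real.sin (2*(π + π/2)) = 0 := by
      rw [show (2:ℝ)*(π+π/2) = 2*π + π by ring, Real.sin_add]; simp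
    have hpi2 : (2:ℝ)*(π/2) = π := by ring
    rw [hpi2, c3, s3, c3p, s3p]
    norm_num [Real.cos_two_pi, Real.sin_two_pi]
    ring
  rw [hL, hR]; ring


lemma pi_restrict (m : ℕ) :
    Measure.pi (fun _ : Fin m => (volume : Measure ℝ).restrict (Set.Icc 0 (2*π)))
      = (volume : Measure (Fin m → ℝ)).restrict
          (Set.univ.pi fun _ => Set.Icc (0:ℝ) (2*π)) := by
  refine (Measure.pi_eq (μ := fun _ : Fin m => (volume : Measure ℝ).restrict (Set.Icc 0 (2*π))) fun s hs => ?_)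
  rw [Measure.restrict_apply (MeasurableSet.univ_pi fun i => hs i),
    ← Set.pi_inter_distrib, volume_pi_pi]
  exact Finset.prod_congr rfl fun i _ =>
    (Measure.restrict_apply (hs i)).symm

lemma integ_box (m : ℕ) (G : (Fin m → ℝ) → ℝ) (hG : Continuous G) :
    Integrable G
      (Measure.pi (fun _ : Fin m => (volume : Measure ℝ).restrict (Set.Icc 0 (2*π)))) := by
  rw [pi_restrict]
  exact hG.continuousOn.integrableOn_compact
    (isCompact_univ_pi fun _ => isCompact_Icc)

lemma main_quad (m : ℕ) : ∀ (G : (Fin m → ℝ) → ℝ), Continuous G →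
    (∀ (k : Fin m) (φ : Fin m → ℝ), ∃ a b c d e : ℝ, ∀ t,
      G (Function.update φ k t) = a + b * Real.cos t + c * Real.sin t
        + d * Real.cos (2*t) + e * Real.sin (2*t)) →
    ∫ φ, G φ ∂(Measure.pi fun _ : Fin m => (volume : Measure ℝ).restrict (Set.Icc 0 (2*π)))
      = (π/2)^m * ∑ c : Fin m → Fin 4, G (fun k => ((c k : ℕ) : ℝ) * (π/2)) := by
  induction m with
  | zero =>
    intro G hG hQ
    have hGc : G = fun _ => G (fun i => i.elim0) :=
      funext fun φ => congrArg G (Subsingleton.elim _ _)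
    rw [hGc, integral_const]
    have : (Measure.pi fun _ : Fin 0 => (volume : Measure ℝ).restrict (Set.Icc 0 (2*π)))
        Set.univ = 1 := by
      rw [Measure.pi_univ]; simp
    rw [measureReal_def, this]
    simp only [pow_zero, one_mul, ENNReal.toReal_one, one_smul]
    rw [Fintype.sum_subsingleton _ (fun i : Fin 0 => (0 : Fin 4))]
  | succ m ih =>
    intro G hG hQ
    set μ1 := (volume : Measure ℝ).restrict (Set.Icc 0 (2*π)) with hμ1
    set μm := Measure.pi (fun _ : Fin m => μ1) with hμm
    have hmp := measurePreserving_piFinSuccAbove (fun _ : Fin (m+1) => μ1) 0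
    have hmps := MeasurePreserving.symm
      (MeasurableEquiv.piFinSuccAbove (fun _ : Fin (m+1) => ℝ) 0) hmp
    have hcons : ∀ (z : ℝ × (Fin m → ℝ)),
        (MeasurableEquiv.piFinSuccAbove (fun _ : Fin (m+1) => ℝ) 0).symm z
          = Fin.cons z.1 z.2 := by
      intro z
      simp [MeasurableEquiv.piFinSuccAbove_symm_apply, Fin.insertNthEquiv,
        Fin.insertNth_zero]
    have h1 : ∫ φ, G φ ∂(Measure.pi fun _ : Fin (m+1) => μ1)
        = ∫ z, G (Fin.cons z.1 z.2) ∂(μ1.prod μm) := by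
      rw [← hmps.integral_comp' G]
      congr 1
      funext z
      rw [hcons z]
    have hint2 : Integrable (fun z : ℝ × (Fin m → ℝ) => G (Fin.cons z.1 z.2))
        (μ1.prod μm) := by
      have h := (hmps.integrable_comp_emb
        (MeasurableEquiv.measurableEmbedding _) (g := G)).2 (integ_box (m+1) G hG)
      have : (G ∘ (MeasurableEquiv.piFinSuccAbove (fun _ : Fin (m+1) => ℝ) 0).symm)
          = fun z : ℝ × (Fin m → ℝ) => G (Fin.cons z.1 z.2) := by
        funext z; simp [Function.comp, hcons z]
      rwa [this] at h
    have hconsC : ∀ x : ℝ, Continuous (fun p : Fin m → ℝ => G (Fin.cons x p)) := by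
      intro x
      have : Continuous (fun p : Fin m → ℝ => (Fin.cons x p : Fin (m+1) → ℝ)) := by
        refine continuous_pi fun i => ?_
        refine Fin.cases ?_ (fun j => ?_) i
        · simpa using (continuous_const : Continuous fun _ : Fin m → ℝ => x)
        · simpa using continuous_apply j
      exact hG.comp this
    have h2 : ∫ z, G (Fin.cons z.1 z.2) ∂(μ1.prod μm)
        = ∫ p, (∫ x, G (Fin.cons x p) ∂μ1) ∂μm :=
      integral_prod_symm _ hint2
    have h3 : ∀ p : Fin m → ℝ, ∫ x, G (Fin.cons x p) ∂μ1
        = (π/2) * ∑ j : Fin 4, G (Fin.cons (((j : ℕ) : ℝ) * (π/2)) p) := by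
      intro p
      obtain ⟨a, b, c, d, e, hq⟩ := hQ 0 (Fin.cons 0 p)
      exact quad1 _ a b c d e (fun t => by
        have := hq t
        rwa [Fin.update_cons_zero] at this)
    have h4 : ∀ j : Fin 4, ∫ p, G (Fin.cons (((j : ℕ) : ℝ) * (π/2)) p) ∂μm
        = (π/2)^m * ∑ c : Fin m → Fin 4,
            G (Fin.cons (((j : ℕ) : ℝ) * (π/2)) (fun k => ((c k : ℕ) : ℝ) * (π/2))) := by
      intro j
      refine ih _ (hconsC _) ?_
      intro k φ
      obtain ⟨a, b, c, d, e, hq⟩ := hQ k.succ (Fin.cons (((j : ℕ) : ℝ) * (π/2)) φ)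
      refine ⟨a, b, c, d, e, fun t => ?_⟩
      have := hq t
      rwa [← Fin.cons_update] at this
    calc ∫ φ, G φ ∂(Measure.pi fun _ : Fin (m+1) => μ1)
        = ∫ p, (∫ x, G (Fin.cons x p) ∂μ1) ∂μm := by rw [h1, h2]
      _ = ∫ p, (π/2) * ∑ j : Fin 4, G (Fin.cons (((j : ℕ) : ℝ) * (π/2)) p) ∂μm := by
          exact integral_congr_ae (Filter.Eventually.of_forall h3)
      _ = (π/2) * ∑ j : Fin 4, ∫ p, G (Fin.cons (((j : ℕ) : ℝ) * (π/2)) p) ∂μm := by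
          rw [integral_const_mul, integral_finset_sum]
          exact fun j _ => integ_box m _ (hconsC _)
      _ = (π/2) * ∑ j : Fin 4, (π/2)^m * ∑ c : Fin m → Fin 4,
            G (Fin.cons (((j : ℕ) : ℝ) * (π/2)) (fun k => ((c k : ℕ) : ℝ) * (π/2))) := by
          rw [Finset.sum_congr rfl (fun j _ => h4 j)]
      _ = (π/2)^(m+1) * ∑ c : Fin (m+1) → Fin 4,
            G (fun k => ((c k : ℕ) : ℝ) * (π/2)) := by
          rw [← Finset.mul_sum]
          have hre : ∑ c : Fin (m+1) → Fin 4, G (fun k => ((c k : ℕ) : ℝ) * (π/2))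
              = ∑ q : Fin 4 × (Fin m → Fin 4),
                  G (fun k => (((Fin.cons q.1 q.2 : Fin (m+1) → Fin 4) k : ℕ) : ℝ) * (π/2)) := by
            exact (Fintype.sum_equiv (Fin.consEquiv (fun _ : Fin (m+1) => Fin 4))
              _ _ (fun q => rfl)).symm
          have hpt : ∀ (j : Fin 4) (c : Fin m → Fin 4),
              (fun k => (((Fin.cons j c : Fin (m+1) → Fin 4) k : ℕ) : ℝ) * (π/2))
                = Fin.cons (((j : ℕ) : ℝ) * (π/2)) (fun k => ((c k : ℕ) : ℝ) * (π/2)) := by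
            intro j c
            funext k
            refine Fin.cases ?_ (fun i => ?_) k <;> simp
          rw [hre, Fintype.sum_prod_type]
          simp_rw [hpt]
          ring

open scoped Classical in
theorem stmt_18 (m : ℕ) (hm : 1 ≤ m) (ε : ℝ) (hε : 0 ≤ ε)
    (F : (Fin m → ℝ) → ℝ) (hFcont : Continuous F)
    (hF : ∀ (k : Fin m) (φ : Fin m → ℝ), ∃ a b c : ℝ, ∀ t : ℝ,
      F (Function.update φ k t) = a + b * Real.cos t + c * Real.sin t)
    (hclif : ∀ c : Fin m → Fin 4,
      F (fun k => ((c k : ℕ) : ℝ) * (Real.pi / 2)) = -1 ∨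
      F (fun k => ((c k : ℕ) : ℝ) * (Real.pi / 2)) = 0 ∨
      F (fun k => ((c k : ℕ) : ℝ) * (Real.pi / 2)) = 1)
    (hmean : (1 / (2 * Real.pi) ^ m) *
        ∫ φ in Set.univ.pi (fun _ : Fin m => Set.Icc (0:ℝ) (2 * Real.pi)), F φ = 0)
    (hvar : (1 / (2 * Real.pi) ^ m) *
        ∫ φ in Set.univ.pi (fun _ : Fin m => Set.Icc (0:ℝ) (2 * Real.pi)), (F φ) ^ 2 ≤ ε) :
    ((Finset.univ.filter (fun c : Fin m → Fin 4 =>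
        F (fun k => ((c k : ℕ) : ℝ) * (Real.pi / 2)) ≠ 0)).card : ℝ) / 4 ^ m ≤ ε := by
  have hQ2 : ∀ (k : Fin m) (φ : Fin m → ℝ), ∃ a b c d e : ℝ, ∀ t,
      (fun ψ => F ψ ^ 2) (Function.update φ k t) = a + b * Real.cos t + c * Real.sin t
        + d * Real.cos (2*t) + e * Real.sin (2*t) := by
    intro k φ
    obtain ⟨a, b, c, habc⟩ := hF k φ
    refine ⟨a^2 + (b^2 + c^2)/2, 2*a*b, 2*a*c, (b^2 - c^2)/2, b*c, fun t => ?_⟩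
    simp only
    rw [habc t, Real.cos_two_mul, Real.sin_two_mul]
    linear_combination c^2 * Real.sin_sq_add_cos_sq t
  have key := main_quad m (fun φ => F φ ^ 2) (hFcont.pow 2) hQ2
  have hbox : (∫ φ in Set.univ.pi (fun _ : Fin m => Set.Icc (0:ℝ) (2 * Real.pi)), (F φ) ^ 2)
      = (π/2)^m * ∑ c : Fin m → Fin 4, F (fun k => ((c k : ℕ) : ℝ) * (π/2)) ^ 2 := by
    rw [← pi_restrict m]
    exact key
  have hsum : ∑ c : Fin m → Fin 4, F (fun k => ((c k : ℕ) : ℝ) * (π/2)) ^ 2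
      = ((Finset.univ.filter (fun c : Fin m → Fin 4 =>
          F (fun k => ((c k : ℕ) : ℝ) * (Real.pi / 2)) ≠ 0)).card : ℝ) := by
    rw [← Finset.sum_boole]
    refine Finset.sum_congr rfl fun c _ => ?_
    rcases hclif c with h | h | h
    · rw [h]; norm_num
    · rw [h]; norm_num
    · rw [h]; norm_num
  have hπ : (π : ℝ) ≠ 0 := Real.pi_ne_zero
  have harith : (1 / (2 * Real.pi) ^ m) * ((π/2)^m *
      ((Finset.univ.filter (fun c : Fin m → Fin 4 =>
        F (fun k => ((c k : ℕ) : ℝ) * (Real.pi / 2)) ≠ 0)).card : ℝ))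
      = ((Finset.univ.filter (fun c : Fin m → Fin 4 =>
        F (fun k => ((c k : ℕ) : ℝ) * (Real.pi / 2)) ≠ 0)).card : ℝ) / 4 ^ m := by
    generalize ((Finset.univ.filter (fun c : Fin m → Fin 4 =>
        F (fun k => ((c k : ℕ) : ℝ) * (Real.pi / 2)) ≠ 0)).card : ℝ) = N
    rw [mul_pow, div_pow, show (4:ℝ)^m = 2^m * 2^m by rw [← mul_pow]; norm_num]
    field_simp
  calc ((Finset.univ.filter (fun c : Fin m → Fin 4 =>
        F (fun k => ((c k : ℕ) : ℝ) * (Real.pi / 2)) ≠ 0)).card : ℝ) / 4 ^ m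
      = (1 / (2 * Real.pi) ^ m) *
        ∫ φ in Set.univ.pi (fun _ : Fin m => Set.Icc (0:ℝ) (2 * Real.pi)), (F φ) ^ 2 := by
        rw [hbox, hsum, harith]
    _ ≤ ε := hvar
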